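/- Let b̂₀ = e₃ be the third standard basis vector of ℝ³, with ∇_⊥, Δ, Δ_⊥, X_⊥, X∥ as follows: ∇_⊥ := (∂_x, ∂_y, 0), Δ := ∂_x² + ∂_y² + ∂_z², Δ_⊥ := ∂_x² + ∂_y², X_⊥ := X − (X·b̂₀)b̂₀, X∥ := X·b̂₀. Let A : ℝ³ → ℝ³ be three times continuously differentiable and 𝒥 : ℝ³ → ℝ³ continuously differentiable with ∇·𝒥 = 0 pointwise. If −Δ_⊥ A∥ = 𝒥∥ and −Δ A_⊥ = 𝒥_⊥ − ∇_⊥(∂_z A∥) hold pointwise, then the perpendicular divergence of A is harmonic: Δ(∂_x A_x + ∂_y A_y) = 0 everywhere. -/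

import Mathlib

open Matrix

/-- The partial derivative `∂f/∂rᵢ`. -/
noncomputable def pd (i : Fin 3) (f : (Fin 3 → ℝ) → ℝ) (r : Fin 3 → ℝ) : ℝ :=
  fderiv ℝ f r (Pi.single i 1)

/-- The divergence `∇·F` of a vector field on ℝ³. -/
noncomputable def divg (F : (Fin 3 → ℝ) → Fin 3 → ℝ) (r : Fin 3 → ℝ) : ℝ :=
  ∑ i, pd i (fun x => F x i) r

/-- The constant unit field `b̂₀ = e₃`. -/
def e3 : Fin 3 → ℝ := Pi.single 2 1

/-- The perpendicular part `v_⊥ = v − (v·e₃) e₃`. -/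
noncomputable def perp (v : Fin 3 → ℝ) : Fin 3 → ℝ := v - (v ⬝ᵥ e3) • e3

/-- The Laplacian `Δf = ∂_x²f + ∂_y²f + ∂_z²f`. -/
noncomputable def lap (f : (Fin 3 → ℝ) → ℝ) (r : Fin 3 → ℝ) : ℝ :=
  ∑ i, pd i (fun x => pd i f x) r

/-- The perpendicular Laplacian `Δ_⊥ f = ∂_x²f + ∂_y²f`. -/
noncomputable def lapPerp (f : (Fin 3 → ℝ) → ℝ) (r : Fin 3 → ℝ) : ℝ :=
  pd 0 (fun x => pd 0 f x) r + pd 1 (fun x => pd 1 f x) r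

/-- The perpendicular gradient `∇_⊥ f = (∂_x f, ∂_y f, 0)`. -/
noncomputable def gradPerp (f : (Fin 3 → ℝ) → ℝ) (r : Fin 3 → ℝ) : Fin 3 → ℝ :=
  ![pd 0 f r, pd 1 f r, 0]

lemma pd_contDiff {f : (Fin 3 → ℝ) → ℝ} {n m : ℕ} (hf : ContDiff ℝ n f) (h : m + 1 ≤ n)
    (i : Fin 3) : ContDiff ℝ m (pd i f) := by
  have h1 : ContDiff ℝ m (fderiv ℝ f) := hf.fderiv_right (by exact_mod_cast h)
  exact (ContinuousLinearMap.apply ℝ ℝ (Pi.single i 1)).contDiff.comp h1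

lemma pd_comm {f : (Fin 3 → ℝ) → ℝ} (hf : ContDiff ℝ 2 f) (i j : Fin 3) :
    pd i (pd j f) = pd j (pd i f) := by
  funext r
  have hs : IsSymmSndFDerivAt ℝ f r := hf.contDiffAt.isSymmSndFDerivAt (by norm_num)
  have hd : Differentiable ℝ (fderiv ℝ f) := (hf.fderiv_right (m := 1) (by norm_num)).differentiable (by norm_num)
  have key : ∀ v w : Fin 3 → ℝ,
      fderiv ℝ (fun x => fderiv ℝ f x v) r w = fderiv ℝ (fderiv ℝ f) r w v := by
    intro v w
    have : fderiv ℝ (fun x => fderiv ℝ f x v) r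
        = ((fderiv ℝ f r).comp (fderiv ℝ (fun _ : Fin 3 → ℝ => v) r)
          + (fderiv ℝ (fderiv ℝ f) r).flip v) := by
      simpa using fderiv_clm_apply (hd r) (differentiableAt_const v)
    simp [this]
  show fderiv ℝ (fun x => fderiv ℝ f x (Pi.single j 1)) r (Pi.single i 1)
      = fderiv ℝ (fun x => fderiv ℝ f x (Pi.single i 1)) r (Pi.single j 1)
  rw [key, key]
  exact (hs _ _).symm

lemma pd_add' {f g : (Fin 3 → ℝ) → ℝ} {r : Fin 3 → ℝ} (hf : DifferentiableAt ℝ f r)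
    (hg : DifferentiableAt ℝ g r) (i : Fin 3) :
    pd i (fun x => f x + g x) r = pd i f r + pd i g r := by
  simp [pd, fderiv_fun_add hf hg]

lemma pd_neg' {f : (Fin 3 → ℝ) → ℝ} {r : Fin 3 → ℝ} (i : Fin 3) :
    pd i (fun x => -f x) r = -pd i f r := by
  simp [pd, fderiv_neg]

lemma pd_add3' {f g h : (Fin 3 → ℝ) → ℝ} {r : Fin 3 → ℝ} (hf : DifferentiableAt ℝ f r)
    (hg : DifferentiableAt ℝ g r) (hh : DifferentiableAt ℝ h r) (i : Fin 3) :
    pd i (fun x => f x + g x + h x) r = pd i f r + pd i g r + pd i h r := by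
  rw [pd_add' (f := fun x => f x + g x) (hf.add hg) hh, pd_add' hf hg]

/-- if `∇·𝒥 = 0` and `A` solves the decoupled Poisson systems, then the
perpendicular divergence of `A` is harmonic: `Δ(∂_x A_x + ∂_y A_y) = 0`. -/
theorem perp_divergence_harmonic
    (A Jv : (Fin 3 → ℝ) → Fin 3 → ℝ)
    (hA : ContDiff ℝ 3 A) (hJ : ContDiff ℝ 1 Jv)
    (hdivJ : ∀ r, divg Jv r = 0)
    (hpar : ∀ r, -lapPerp (fun x => A x 2) r = Jv r 2)
    (hperpEq : ∀ r, (fun i => -lap (fun x => perp (A x) i) r)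
        = perp (Jv r) - gradPerp (fun x => pd 2 (fun y => A y 2) x) r) :
    ∀ r, lap (fun x => pd 0 (fun y => A y 0) x + pd 1 (fun y => A y 1) x) r = 0 := by
  intro r
  set A0 : (Fin 3 → ℝ) → ℝ := fun x => A x 0 with hA0def
  set A1 : (Fin 3 → ℝ) → ℝ := fun x => A x 1 with hA1def
  set A2 : (Fin 3 → ℝ) → ℝ := fun x => A x 2 with hA2def
  have cA0 : ContDiff ℝ 3 A0 := contDiff_pi.mp hA 0
  have cA1 : ContDiff ℝ 3 A1 := contDiff_pi.mp hA 1
  have cA2 : ContDiff ℝ 3 A2 := contDiff_pi.mp hA 2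
  have cJ : ∀ i, ContDiff ℝ 1 fun x => Jv x i := fun i => contDiff_pi.mp hJ i
  have h3 : ∀ f : (Fin 3 → ℝ) → ℝ, ContDiff ℝ 3 f → ∀ i, ContDiff ℝ 2 (pd i f) :=
    fun f hf i => pd_contDiff hf (by norm_num) i
  have h2 : ∀ f : (Fin 3 → ℝ) → ℝ, ContDiff ℝ 2 f → ∀ i, ContDiff ℝ 1 (pd i f) :=
    fun f hf i => pd_contDiff hf (by norm_num) i
  -- differentiability of second and first partials
  have dd2 : ∀ f : (Fin 3 → ℝ) → ℝ, ContDiff ℝ 3 f → ∀ i j,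
      Differentiable ℝ (pd i (pd j f)) :=
    fun f hf i j => (h2 _ (h3 f hf j) i).differentiable (by norm_num)
  have dd1 : ∀ f : (Fin 3 → ℝ) → ℝ, ContDiff ℝ 3 f → ∀ i,
      Differentiable ℝ (pd i f) :=
    fun f hf i => (h3 f hf i).differentiable (by norm_num)
  have dJ : ∀ i, Differentiable ℝ fun x => Jv x i := fun i => (cJ i).differentiable (by norm_num)
  -- third-order commutation
  have comm3 : ∀ (f : (Fin 3 → ℝ) → ℝ), ContDiff ℝ 3 f → ∀ i j : Fin 3,
      pd i (pd i (pd j f)) = pd j (pd i (pd i f)) := by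
    intro f hf i j
    rw [pd_comm (hf.of_le (by norm_num)) i j]
    exact pd_comm (h3 f hf i) i j
  -- perp components
  have hperp0 : ∀ v : Fin 3 → ℝ, perp v 0 = v 0 := by
    intro v; simp [perp, e3, Pi.single_apply]
  have hperp1 : ∀ v : Fin 3 → ℝ, perp v 1 = v 1 := by
    intro v; simp [perp, e3, Pi.single_apply]
  -- the Poisson equations, componentwise
  have hE0 : ∀ x, pd 0 (pd 0 A0) x + pd 1 (pd 1 A0) x + pd 2 (pd 2 A0) x
      = -(Jv x 0) + pd 0 (pd 2 A2) x := by
    intro x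
    have h := congrFun (hperpEq x) 0
    simp only [hperp0, Pi.sub_apply, gradPerp, Matrix.cons_val_zero, lap,
      Fin.sum_univ_three] at h
    linarith
  have hE1 : ∀ x, pd 0 (pd 0 A1) x + pd 1 (pd 1 A1) x + pd 2 (pd 2 A1) x
      = -(Jv x 1) + pd 1 (pd 2 A2) x := by
    intro x
    have h := congrFun (hperpEq x) 1
    simp only [hperp1, Pi.sub_apply, gradPerp, Matrix.cons_val_one, Matrix.head_cons, Matrix.cons_val_zero, lap,
      Fin.sum_univ_three] at h
    linarith
  have hJ2 : (fun x => Jv x 2) = fun x => -(pd 0 (pd 0 A2) x + pd 1 (pd 1 A2) x) := by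
    funext x
    have h := hpar x
    simp only [lapPerp] at h
    linarith
  -- ∂₀ of the A0-equation
  have key0 : pd 0 (pd 0 (pd 0 A0)) r + pd 0 (pd 1 (pd 1 A0)) r + pd 0 (pd 2 (pd 2 A0)) r
      = -(pd 0 (fun x => Jv x 0) r) + pd 0 (pd 0 (pd 2 A2)) r := by
    have e1 : (fun x => pd 0 (pd 0 A0) x + pd 1 (pd 1 A0) x + pd 2 (pd 2 A0) x)
        = fun x => -(Jv x 0) + pd 0 (pd 2 A2) x := funext hE0
    have L := pd_add3' ((dd2 A0 cA0 0 0) r) ((dd2 A0 cA0 1 1) r) ((dd2 A0 cA0 2 2) r) 0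
    rw [e1] at L
    have R := pd_add' (f := fun x => -Jv x 0) (((dJ 0).neg) r) ((dd2 A2 cA2 0 2) r) 0
    rw [pd_neg' (f := fun x => Jv x 0)] at R
    rw [← L, R]
  -- ∂₁ of the A1-equation
  have key1 : pd 1 (pd 0 (pd 0 A1)) r + pd 1 (pd 1 (pd 1 A1)) r + pd 1 (pd 2 (pd 2 A1)) r
      = -(pd 1 (fun x => Jv x 1) r) + pd 1 (pd 1 (pd 2 A2)) r := by
    have e1 : (fun x => pd 0 (pd 0 A1) x + pd 1 (pd 1 A1) x + pd 2 (pd 2 A1) x)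
        = fun x => -(Jv x 1) + pd 1 (pd 2 A2) x := funext hE1
    have L := pd_add3' ((dd2 A1 cA1 0 0) r) ((dd2 A1 cA1 1 1) r) ((dd2 A1 cA1 2 2) r) 1
    rw [e1] at L
    have R := pd_add' (f := fun x => -Jv x 1) (((dJ 1).neg) r) ((dd2 A2 cA2 1 2) r) 1
    rw [pd_neg' (f := fun x => Jv x 1)] at R
    rw [← L, R]
  -- ∂₂ of the parallel equation, combined with div J = 0
  have keyJ : pd 2 (fun x => Jv x 2) r
      = -(pd 2 (pd 0 (pd 0 A2)) r + pd 2 (pd 1 (pd 1 A2)) r) := by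
    rw [hJ2]
    have : pd 2 (fun x => -(pd 0 (pd 0 A2) x + pd 1 (pd 1 A2) x)) r
        = -pd 2 (fun x => pd 0 (pd 0 A2) x + pd 1 (pd 1 A2) x) r :=
      pd_neg' (f := fun x => pd 0 (pd 0 A2) x + pd 1 (pd 1 A2) x) 2
    rw [this, pd_add' ((dd2 A2 cA2 0 0) r) ((dd2 A2 cA2 1 1) r) 2]
  have hdiv : pd 0 (fun x => Jv x 0) r + pd 1 (fun x => Jv x 1) r
      + pd 2 (fun x => Jv x 2) r = 0 := by
    have := hdivJ r
    simpa [divg, Fin.sum_univ_three] using this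
  -- assemble
  have goal_eq : lap (fun x => pd 0 A0 x + pd 1 A1 x) r
      = pd 0 (pd 0 (fun x => pd 0 A0 x + pd 1 A1 x)) r
        + pd 1 (pd 1 (fun x => pd 0 A0 x + pd 1 A1 x)) r
        + pd 2 (pd 2 (fun x => pd 0 A0 x + pd 1 A1 x)) r := by
    simp [lap, Fin.sum_univ_three]
  have step1 : ∀ i : Fin 3, pd i (fun x => pd 0 A0 x + pd 1 A1 x)
      = fun x => pd i (pd 0 A0) x + pd i (pd 1 A1) x := by
    intro i
    funext x
    exact pd_add' ((dd1 A0 cA0 0) x) ((dd1 A1 cA1 1) x) i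
  have step2 : ∀ i : Fin 3, pd i (pd i (fun x => pd 0 A0 x + pd 1 A1 x)) r
      = pd i (pd i (pd 0 A0)) r + pd i (pd i (pd 1 A1)) r := by
    intro i
    rw [step1 i]
    exact pd_add' ((dd2 A0 cA0 i 0) r) ((dd2 A1 cA1 i 1) r) i
  rw [goal_eq, step2 0, step2 1, step2 2,
    comm3 A0 cA0 1 0, comm3 A0 cA0 2 0, comm3 A1 cA1 0 1, comm3 A1 cA1 2 1,
    comm3 A2 cA2 0 2, comm3 A2 cA2 1 2] at *
  linarith [key0, key1, keyJ, hdiv]
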